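/- Suppose f₀(x) ≤ v₁|x|^{−β} with β > 1, and let a = (1+β)/(2β), so βa = (β+1)/2 > 1. If for an index set A^c ⊆ {1,…,n} every i ∈ A^c satisfies min_{1≤j≤m}|X_i − μ_j| ≥ σ^{1−a} for a given σ ∈ (0,1], then Σ_{i∈A^c} log(Σ_{j=1}^m (α_j/σ) f₀((X_i−μ_j)/σ)) ≤ |A^c| (log v₁ + (1/2)(β−1) log σ). -/
import Mathlib


/-- Tail part of the log-likelihood: if `f₀(x) ≤ v₁|x|^{−β}` with `β > 1`,
`a = (1+β)/(2β)`, and all observations indexed by `Ac` are at distance at least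
`σ^{1−a}` from every support point, then
`Σ_{i∈Ac} log(Σ_j (α_j/σ) f₀((X_i−μ_j)/σ)) ≤ |Ac|(log v₁ + (1/2)(β−1) log σ)`. -/
theorem loglik_tail_bound (n m : ℕ) (hm : 0 < m) (X : Fin n → ℝ) (f₀ : ℝ → ℝ)
    (v₁ β : ℝ) (hv₁ : 0 < v₁) (hβ : 1 < β)
    (hf0 : ∀ x, 0 < f₀ x)
    (hbd : ∀ x : ℝ, x ≠ 0 → f₀ x ≤ v₁ * |x| ^ (-β))
    (α t : Fin m → ℝ) (hα : ∀ j, 0 ≤ α j) (hs : ∑ j, α j = 1)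
    (σ : ℝ) (hσ0 : 0 < σ) (hσ1 : σ ≤ 1)
    (Ac : Finset (Fin n))
    (hAc : ∀ i ∈ Ac, ∀ j, σ ^ (1 - (1 + β) / (2 * β)) ≤ |X i - t j|) :
    ∑ i ∈ Ac, Real.log (∑ j, (α j / σ) * f₀ ((X i - t j) / σ)) ≤
      Ac.card * (Real.log v₁ + (1 / 2) * (β - 1) * Real.log σ) := by
  have hβ0 : (0:ℝ) < β := by linarith
  have hσne : σ ≠ 0 := ne_of_gt hσ0
  set s : ℝ := σ ^ ((β - 1) / 2) with hsdef
  have hspos : 0 < s := Real.rpow_pos_of_pos hσ0 _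
  -- some mixing weight is positive
  obtain ⟨j₀, hj₀⟩ : ∃ j, 0 < α j := by
    by_contra h
    push_neg at h
    have : ∑ j, α j = 0 :=
      Finset.sum_eq_zero fun j _ => le_antisymm (h j) (hα j)
    rw [hs] at this; norm_num at this
  -- per-element bound
  have key : ∀ i ∈ Ac,
      Real.log (∑ j, (α j / σ) * f₀ ((X i - t j) / σ)) ≤
        Real.log v₁ + (1 / 2) * (β - 1) * Real.log σ := by
    intro i hi
    have hterm : ∀ j, (α j / σ) * f₀ ((X i - t j) / σ) ≤ α j * (v₁ * s) := by
      intro j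
      have hx := hAc i hi j
      have hxpos : 0 < |X i - t j| :=
        lt_of_lt_of_le (Real.rpow_pos_of_pos hσ0 _) hx
      have hxne : X i - t j ≠ 0 := by
        intro h; rw [h, abs_zero] at hxpos; exact lt_irrefl _ hxpos
      have hyne : (X i - t j) / σ ≠ 0 := div_ne_zero hxne hσne
      have habs : |(X i - t j) / σ| = |X i - t j| / σ := by
        rw [abs_div, abs_of_pos hσ0]
      have hge : σ ^ (1 - (1 + β) / (2 * β) - 1) ≤ |(X i - t j) / σ| := by
        rw [habs, Real.rpow_sub hσ0, Real.rpow_one]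
        gcongr
      have hrp : |(X i - t j) / σ| ^ (-β) ≤ (σ ^ (1 - (1 + β) / (2 * β) - 1)) ^ (-β) :=
        Real.rpow_le_rpow_of_nonpos (Real.rpow_pos_of_pos hσ0 _) hge (by linarith)
      have hcalc : (σ ^ (1 - (1 + β) / (2 * β) - 1)) ^ (-β) = σ ^ ((β + 1) / 2) := by
        rw [← Real.rpow_mul hσ0.le]
        congr 1
        field_simp
        ring
      have hf : f₀ ((X i - t j) / σ) ≤ v₁ * σ ^ ((β + 1) / 2) := by
        calc f₀ ((X i - t j) / σ) ≤ v₁ * |(X i - t j) / σ| ^ (-β) := hbd _ hyne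
          _ ≤ v₁ * (σ ^ (1 - (1 + β) / (2 * β) - 1)) ^ (-β) := by
              exact mul_le_mul_of_nonneg_left hrp hv₁.le
          _ = v₁ * σ ^ ((β + 1) / 2) := by rw [hcalc]
      have hσs : σ ^ ((β + 1) / 2) / σ = s := by
        rw [hsdef, show (β - 1) / 2 = (β + 1) / 2 - 1 by ring, Real.rpow_sub hσ0,
          Real.rpow_one]
      calc (α j / σ) * f₀ ((X i - t j) / σ)
          ≤ (α j / σ) * (v₁ * σ ^ ((β + 1) / 2)) := by
            apply mul_le_mul_of_nonneg_left hf
            exact div_nonneg (hα j) hσ0.le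
        _ = α j * (v₁ * (σ ^ ((β + 1) / 2) / σ)) := by ring
        _ = α j * (v₁ * s) := by rw [hσs]
    have hsumle : ∑ j, (α j / σ) * f₀ ((X i - t j) / σ) ≤ v₁ * s := by
      calc ∑ j, (α j / σ) * f₀ ((X i - t j) / σ)
          ≤ ∑ j, α j * (v₁ * s) := Finset.sum_le_sum fun j _ => hterm j
        _ = (∑ j, α j) * (v₁ * s) := by rw [Finset.sum_mul]
        _ = v₁ * s := by rw [hs, one_mul]
    have hsumpos : 0 < ∑ j, (α j / σ) * f₀ ((X i - t j) / σ) := by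
      refine Finset.sum_pos' (fun j _ => mul_nonneg (div_nonneg (hα j) hσ0.le) (hf0 _).le)
        ⟨j₀, Finset.mem_univ j₀, mul_pos (div_pos hj₀ hσ0) (hf0 _)⟩
    calc Real.log (∑ j, (α j / σ) * f₀ ((X i - t j) / σ))
        ≤ Real.log (v₁ * s) := Real.log_le_log hsumpos hsumle
      _ = Real.log v₁ + Real.log s := Real.log_mul hv₁.ne' hspos.ne'
      _ = Real.log v₁ + (1 / 2) * (β - 1) * Real.log σ := by
          rw [hsdef, Real.log_rpow hσ0]; ring
  calc ∑ i ∈ Ac, Real.log (∑ j, (α j / σ) * f₀ ((X i - t j) / σ))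
      ≤ ∑ _i ∈ Ac, (Real.log v₁ + (1 / 2) * (β - 1) * Real.log σ) :=
        Finset.sum_le_sum key
    _ = Ac.card * (Real.log v₁ + (1 / 2) * (β - 1) * Real.log σ) := by
        rw [Finset.sum_const, nsmul_eq_mul]
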